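/- For every t ∈ ℕ, the random permutation π_t given by t steps of the overlapping cycles shuffle satisfies π_t⁻¹ =_d σ·π_t·σ⁻¹; that is, the pushforward of μ_t under the map g ↦ g⁻¹ equals the pushforward of μ_t under the map g ↦ σ·g·σ⁻¹. -/

import Mathlib

open scoped Classical

/-- One step of the overlapping cycles shuffle acting on positions `1,…,n`
    (`coin = true` means Heads). -/
def ocsStep (n m x : ℕ) (coin : Bool) : ℕ :=
  if x < m then x + 1
  else if x = m then (if coin then 1 else m + 1)
  else if x < n then (if coin then x else x + 1)
  else if coin then x else 1

/-- Position after `t` steps of the card initially at position `i`,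
    using coin sequence `c` (0-indexed: step `r+1` uses coin `c r`). -/
def ocsPos (n m : ℕ) (c : ℕ → Bool) (i : ℕ) : ℕ → ℕ
  | 0 => i
  | t + 1 => ocsStep n m (ocsPos n m c i t) (c t)
/-- Probability, with respect to the uniform distribution on the first `T`
    independent fair coins, of an event `P` on coin sequences. -/
noncomputable def prob (T : ℕ) (P : (ℕ → Bool) → Prop) : ℝ :=
  ((Finset.univ.filter
      (fun c : Fin T → Bool =>
        P (fun r => if h : r < T then c ⟨r, h⟩ else false))).card : ℝ) / 2 ^ T
/-- `μ_t(g)`: probability that after `t` steps of the overlapping cycles shuffle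
    the card starting in position `j` is in position `g(j)` for every `j`
    (positions `1,…,n`, encoded by `Fin n` via `j ↦ j+1`); this is the
    distribution of the product `g_t ⋯ g_1` of the `t` independent steps. -/
noncomputable def shuffleDist (n m t : ℕ) (g : Equiv.Perm (Fin n)) : ℝ :=
  prob t (fun c => ∀ j : Fin n, ocsPos n m c ((j : ℕ) + 1) t = ((g j : Fin n) : ℕ) + 1)

/-- Total variation distance between `μ_t` and the uniform distribution on `S_n`. -/
noncomputable def tvUniform (n m t : ℕ) : ℝ :=
  (1 / 2) * ∑ g : Equiv.Perm (Fin n), |shuffleDist n m t g - 1 / (Nat.factorial n)|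

/-! ### Auxiliary lemmas -/

/-- The "reversal" map on positions `1,…,n`. -/
def srev (n m x : ℕ) : ℕ := if x ≤ m then m + 1 - x else n + m + 1 - x

set_option maxHeartbeats 1000000

lemma ocsStep_range {n m : ℕ} (hm : 2 ≤ m) (hmn : m + 1 ≤ n) {x : ℕ} (b : Bool)
    (h1 : 1 ≤ x) (h2 : x ≤ n) : 1 ≤ ocsStep n m x b ∧ ocsStep n m x b ≤ n := by
  simp only [ocsStep]
  cases b <;> split_ifs <;> omega

lemma srev_range {n m : ℕ} (hm : 2 ≤ m) (hmn : m + 1 ≤ n) {x : ℕ}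
    (h1 : 1 ≤ x) (h2 : x ≤ n) : 1 ≤ srev n m x ∧ srev n m x ≤ n := by
  simp only [srev]; split_ifs <;> omega

/-- Conjugating one shuffle step by `srev` inverts it. -/
lemma key_step {n m : ℕ} (hm : 2 ≤ m) (hmn : m + 1 ≤ n) {x : ℕ} (b : Bool)
    (h1 : 1 ≤ x) (h2 : x ≤ n) :
    ocsStep n m (srev n m (ocsStep n m x b)) b = srev n m x := by
  simp only [ocsStep, srev]
  cases b <;> split_ifs <;> omega

lemma ocsPos_congr {n m : ℕ} {c d : ℕ → Bool} {x t : ℕ}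
    (h : ∀ r < t, c r = d r) : ocsPos n m c x t = ocsPos n m d x t := by
  induction t with
  | zero => rfl
  | succ t ih =>
    show ocsStep n m (ocsPos n m c x t) (c t) = ocsStep n m (ocsPos n m d x t) (d t)
    rw [ih (fun r hr => h r (by omega)), h t (by omega)]

lemma ocsPos_shift {n m : ℕ} (c : ℕ → Bool) (x t : ℕ) :
    ocsPos n m c x (t + 1) = ocsPos n m (fun r => c (r + 1)) (ocsStep n m x (c 0)) t := by
  induction t with
  | zero => rfl
  | succ t ih =>
    show ocsStep n m (ocsPos n m c x (t + 1)) (c (t + 1)) = _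
    rw [ih]; rfl

lemma ocsPos_range {n m : ℕ} (hm : 2 ≤ m) (hmn : m + 1 ≤ n) (c : ℕ → Bool) {x : ℕ} (t : ℕ)
    (h1 : 1 ≤ x) (h2 : x ≤ n) : 1 ≤ ocsPos n m c x t ∧ ocsPos n m c x t ≤ n := by
  induction t with
  | zero => exact ⟨h1, h2⟩
  | succ t ih => exact ocsStep_range hm hmn (c t) ih.1 ih.2

/-- Running the shuffle with the reversed coin sequence, starting from the
`srev`-image of the end position, returns the `srev`-image of the start. -/
lemma ocsPos_rev {n m : ℕ} (hm : 2 ≤ m) (hmn : m + 1 ≤ n) (t : ℕ) (c : ℕ → Bool) {x : ℕ}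
    (h1 : 1 ≤ x) (h2 : x ≤ n) :
    ocsPos n m (fun r => c (t - 1 - r)) (srev n m (ocsPos n m c x t)) t = srev n m x := by
  induction t with
  | zero => rfl
  | succ t ih =>
    have hy := ocsPos_range hm hmn c t h1 h2
    rw [ocsPos_shift]
    have e1 : (fun r => c (t + 1 - 1 - (r + 1))) = fun r => c (t - 1 - r) := by
      funext r; congr 1; omega
    show ocsPos n m (fun r => c (t + 1 - 1 - (r + 1)))
        (ocsStep n m (srev n m (ocsPos n m c x (t + 1))) (c (t + 1 - 1 - 0))) t = srev n m x
    rw [e1, show t + 1 - 1 - 0 = t by omega,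
      show ocsPos n m c x (t + 1) = ocsStep n m (ocsPos n m c x t) (c t) from rfl,
      key_step hm hmn (c t) hy.1 hy.2]
    exact ih

section Sigma
variable {n m : ℕ} (σ : Equiv.Perm (Fin n))
variable (hσ : ∀ x : Fin n, ((σ x : Fin n) : ℕ) + 1 =
      if (x : ℕ) + 1 ≤ m then m + 1 - ((x : ℕ) + 1) else n + m + 1 - ((x : ℕ) + 1))

include hσ

lemma hs (x : Fin n) : ((σ x : Fin n) : ℕ) + 1 = srev n m ((x : ℕ) + 1) := by
  rw [hσ x]; rfl

lemma sigma_invol (hm : 2 ≤ m) (hmn : m + 1 ≤ n) (x : Fin n) : σ (σ x) = x := by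
  have h1 := hσ x
  have h2 := hσ (σ x)
  have b1 : (x : ℕ) < n := x.isLt
  have b2 : ((σ x : Fin n) : ℕ) < n := (σ x).isLt
  have b3 : ((σ (σ x) : Fin n) : ℕ) < n := (σ (σ x)).isLt
  have : ((σ (σ x) : Fin n) : ℕ) = (x : ℕ) := by split_ifs at h1 h2 <;> omega
  exact Fin.val_injective this

lemma sigma_inv_eq (hm : 2 ≤ m) (hmn : m + 1 ≤ n) (y : Fin n) : σ⁻¹ y = σ y := by
  conv_lhs => rw [← sigma_invol σ hσ hm hmn y]
  simp

/-- If the coin sequence `c` realizes the permutation `h⁻¹` (as a map of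
positions), then the reversed coin sequence realizes `σ⁻¹ * h * σ`. -/
lemma pred_forward (hm : 2 ≤ m) (hmn : m + 1 ≤ n)
    (t : ℕ) (c : ℕ → Bool) (h : Equiv.Perm (Fin n))
    (H : ∀ j : Fin n, ocsPos n m c ((j : ℕ) + 1) t = ((h⁻¹ j : Fin n) : ℕ) + 1) :
    ∀ j : Fin n, ocsPos n m (fun r => c (t - 1 - r)) ((j : ℕ) + 1) t
      = (((σ⁻¹ * h * σ) j : Fin n) : ℕ) + 1 := by
  intro j
  set k := h (σ j) with hk
  have Ha : ocsPos n m c ((k : ℕ) + 1) t = ((σ j : Fin n) : ℕ) + 1 := by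
    rw [H k]; congr 2; simp [hk]
  have R := ocsPos_rev (n := n) (m := m) hm hmn t c (x := (k : ℕ) + 1)
    (by omega) (by exact k.isLt)
  rw [Ha, ← hs σ hσ (σ j), ← hs σ hσ k, sigma_invol σ hσ hm hmn j] at R
  have : ((σ⁻¹ * h * σ) j : Fin n) = σ k := by
    simp only [Equiv.Perm.mul_apply, ← hk, sigma_inv_eq σ hσ hm hmn]
  rw [this]
  exact R

end Sigma

/-- For every `t`, the random permutation `π_t` of `t` steps of the
overlapping cycles shuffle satisfies `π_t⁻¹ =_d σ·π_t·σ⁻¹`: the pushforward of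
`μ_t` under `g ↦ g⁻¹` equals its pushforward under `g ↦ σ·g·σ⁻¹`, where `σ` is
the permutation with `σ(j) = m+1−j` for `1 ≤ j ≤ m` and `σ(j) = n+m+1−j` for
`m+1 ≤ j ≤ n` (positions encoded by `Fin n` via `j ↦ j+1`). -/
theorem inverse_shuffle_distribution (n m : ℕ) (hm : 2 ≤ m) (hmn : m ≤ n - 1)
    (σ : Equiv.Perm (Fin n))
    (hσ : ∀ x : Fin n, ((σ x : Fin n) : ℕ) + 1 =
      if (x : ℕ) + 1 ≤ m then m + 1 - ((x : ℕ) + 1) else n + m + 1 - ((x : ℕ) + 1))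
    (t : ℕ) :
    ∀ h : Equiv.Perm (Fin n),
      shuffleDist n m t h⁻¹ = shuffleDist n m t (σ⁻¹ * h * σ) := by
  intro h
  have hm1 : m + 1 ≤ n := by omega
  -- pointwise identity for the double conjugation
  have hconj : ∀ j : Fin n, ((σ⁻¹ * (σ⁻¹ * h * σ)⁻¹ * σ) j : Fin n) = h⁻¹ j := by
    intro j
    simp only [mul_inv_rev, inv_inv, Equiv.Perm.mul_apply]
    rw [sigma_invol σ hσ hm hm1 j, sigma_inv_eq σ hσ hm hm1,
      sigma_inv_eq σ hσ hm hm1, sigma_invol σ hσ hm hm1]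
  -- the reversal map on finite coin sequences
  set R : (Fin t → Bool) → (Fin t → Bool) :=
    fun c i => c ⟨t - 1 - i.1, by have := i.isLt; omega⟩ with hR
  have hRR : ∀ c, R (R c) = c := by
    intro c; funext i
    simp only [hR]
    congr 1
    have := i.isLt
    exact Fin.val_injective (by simp; omega)
  -- extension and agreement
  have hagree : ∀ c : Fin t → Bool, ∀ r < t,
      (fun r => if h' : r < t then (R c) ⟨r, h'⟩ else false) r
        = (fun r => (fun r' => if h' : r' < t then c ⟨r', h'⟩ else false) (t - 1 - r)) r := by
    intro c r hr
    simp only [hR, dif_pos hr, dif_pos (show t - 1 - r < t by omega)]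
  unfold shuffleDist prob
  congr 1
  norm_cast
  apply Finset.card_nbij' R R
  · intro c hc
    simp only [Finset.mem_coe, Finset.mem_filter, Finset.mem_univ, true_and] at hc ⊢
    intro j
    rw [ocsPos_congr (hagree c)]
    exact pred_forward σ hσ hm hm1 t _ h hc j
  · intro c hc
    simp only [Finset.mem_coe, Finset.mem_filter, Finset.mem_univ, true_and] at hc ⊢
    intro j
    rw [ocsPos_congr (hagree c)]
    have hc' : ∀ j : Fin n,
        ocsPos n m (fun r => if h' : r < t then c ⟨r, h'⟩ else false) ((j : ℕ) + 1) t
          = ((((σ⁻¹ * h * σ)⁻¹)⁻¹ j : Fin n) : ℕ) + 1 := by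
      simpa [inv_inv] using hc
    have := pred_forward σ hσ hm hm1 t _ ((σ⁻¹ * h * σ)⁻¹) hc' j
    rw [hconj j] at this
    exact this
  · intro c _; exact hRR c
  · intro c _; exact hRR c
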